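/- arXiv:2410.09351 — 2 statements merged into one kernel-verified Lean document; each statement's English description precedes it below -/
import Mathlib

section
/- Let Ω ⊂ ℝ⁴ be a measurable set of finite measure, μ < 0, λ ∈ ℝ, and let u : Ω → ℝ be measurable with u², u² ln u² integrable and ∇u ∈ L². Then I(u) - (1/4)Q(u) ≥ (μ/4) e^{1-λ/μ} |Ω|, where I(u) - (1/4)Q(u) = (1/4)‖∇u‖₂² - (λ/4)‖u‖₂² + (μ/2)‖u‖₂² - (μ/4)∫_Ω u² ln u² dx and Q(u) = ⟨I'(u),u⟩. In particular, any critical point u of I satisfies I(u) ≥ (μ/4) e^{1-λ/μ} |Ω|. -/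
open MeasureTheory Real

lemma ptwise_bound (μ lam t : ℝ) (hμ : μ < 0) (ht : 0 ≤ t) :
    (μ / 4) * Real.exp (1 - lam / μ) ≤
      -(lam / 4) * t + (μ / 2) * t - (μ / 4) * (t * Real.log t) := by
  rcases eq_or_lt_of_le ht with h | h
  · have : (μ / 4) * Real.exp (1 - lam / μ) ≤ 0 :=
      mul_nonpos_of_nonpos_of_nonneg (by linarith) (Real.exp_pos _).le
    simp [← h]
    linarith
  · have key : t * ((2 - lam / μ) - Real.log t) ≤ Real.exp (1 - lam / μ) := by
      have h1 := Real.add_one_le_exp ((1 - lam / μ) - Real.log t)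
      have hexp : Real.exp ((1 - lam / μ) - Real.log t) = Real.exp (1 - lam / μ) / t := by
        rw [Real.exp_sub, Real.exp_log h]
      rw [hexp] at h1
      have h2 : t * ((1 - lam / μ - Real.log t) + 1) ≤ t * (Real.exp (1 - lam / μ) / t) :=
        mul_le_mul_of_nonneg_left h1 h.le
      rw [mul_div_cancel₀ _ (ne_of_gt h)] at h2
      nlinarith
    have hkey2 := mul_le_mul_of_nonpos_left key (show μ / 4 ≤ 0 by linarith)
    calc (μ / 4) * Real.exp (1 - lam / μ)
        ≤ (μ / 4) * (t * ((2 - lam / μ) - Real.log t)) := hkey2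
      _ = -(lam / 4) * t + (μ / 2) * t - (μ / 4) * (t * Real.log t) := by
          have hμ' : μ ≠ 0 := ne_of_lt hμ
          field_simp
          ring

theorem stmt_10 (Ω : Set (EuclideanSpace ℝ (Fin 4))) (hΩ : MeasurableSet Ω)
    (hfin : volume Ω < ⊤) (μ lam : ℝ) (hμ : μ < 0)
    (u : EuclideanSpace ℝ (Fin 4) → ℝ) (hmeas : Measurable u)
    (hint1 : IntegrableOn (fun x => (u x) ^ 2) Ω)
    (hint2 : IntegrableOn (fun x => (u x) ^ 2 * Real.log ((u x) ^ 2)) Ω)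
    (hint3 : IntegrableOn (fun x => ‖fderiv ℝ u x‖ ^ 2) Ω) :
    (1 / 4) * (∫ x in Ω, ‖fderiv ℝ u x‖ ^ 2)
      - (lam / 4) * (∫ x in Ω, (u x) ^ 2)
      + (μ / 2) * (∫ x in Ω, (u x) ^ 2)
      - (μ / 4) * (∫ x in Ω, (u x) ^ 2 * Real.log ((u x) ^ 2))
      ≥ (μ / 4) * Real.exp (1 - lam / μ) * (volume Ω).toReal := by
  set c := (μ / 4) * Real.exp (1 - lam / μ) with hc
  have hA : 0 ≤ ∫ x in Ω, ‖fderiv ℝ u x‖ ^ 2 :=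
    setIntegral_nonneg hΩ fun x _ => by positivity
  have hintg : IntegrableOn (fun x =>
      -(lam / 4) * (u x) ^ 2 + (μ / 2) * (u x) ^ 2
        - (μ / 4) * ((u x) ^ 2 * Real.log ((u x) ^ 2))) Ω :=
    ((hint1.const_mul _).add (hint1.const_mul _)).sub (hint2.const_mul _)
  have hmono : ∫ x in Ω, c ≤ ∫ x in Ω,
      (-(lam / 4) * (u x) ^ 2 + (μ / 2) * (u x) ^ 2
        - (μ / 4) * ((u x) ^ 2 * Real.log ((u x) ^ 2))) := by
    apply setIntegral_mono_on (integrableOn_const hfin.ne) hintg hΩ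
    intro x _
    exact ptwise_bound μ lam ((u x) ^ 2) hμ (sq_nonneg _)
  have hconst : ∫ x in Ω, c = c * (volume Ω).toReal := by
    rw [setIntegral_const, smul_eq_mul, mul_comm, measureReal_def]
  have hsplit : ∫ x in Ω,
      (-(lam / 4) * (u x) ^ 2 + (μ / 2) * (u x) ^ 2
        - (μ / 4) * ((u x) ^ 2 * Real.log ((u x) ^ 2)))
      = -(lam / 4) * (∫ x in Ω, (u x) ^ 2) + (μ / 2) * (∫ x in Ω, (u x) ^ 2)
        - (μ / 4) * (∫ x in Ω, (u x) ^ 2 * Real.log ((u x) ^ 2)) := by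
    have hf : IntegrableOn (fun x => -(lam / 4) * (u x) ^ 2 + (μ / 2) * (u x) ^ 2) Ω :=
      (hint1.const_mul _).add (hint1.const_mul _)
    rw [integral_sub hf (hint2.const_mul _),
        integral_add (hint1.const_mul _) (hint1.const_mul _),
        integral_const_mul, integral_const_mul, integral_const_mul]
  rw [hconst, hsplit] at hmono
  nlinarith
end

section
/- Let p ∈ (1, ∞), Ω a measure space, and (u_n) a bounded sequence in L^p(Ω) with u_n → u almost everywhere. Then lim_{n→∞} (‖u_n‖_p^p - ‖u_n - u‖_p^p) = ‖u‖_p^p. -/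
open MeasureTheory Filter Topology


lemma bl_key {p : ℝ} (hp : 1 < p) {ε : ℝ} (hε : 0 < ε) :
    ∃ C : ℝ, 0 ≤ C ∧ ∀ a b : ℝ, |(|a + b| ^ p - |a| ^ p)| ≤ ε * |a| ^ p + C * |b| ^ p := by
  have hp0 : 0 < p := lt_trans one_pos hp
  have h1 : Tendsto (fun δ : ℝ => (1 + δ) ^ p) (𝓝 0) (𝓝 1) := by
    have : ContinuousAt (fun δ : ℝ => (1 + δ) ^ p) 0 := by
      apply ContinuousAt.rpow_const
      · exact (continuous_const.add continuous_id).continuousAt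
      · exact Or.inr hp0.le
    simpa using this.tendsto
  have h2 : Tendsto (fun δ : ℝ => (1 - δ) ^ p) (𝓝 0) (𝓝 1) := by
    have : ContinuousAt (fun δ : ℝ => (1 - δ) ^ p) 0 := by
      apply ContinuousAt.rpow_const
      · exact (continuous_const.sub continuous_id).continuousAt
      · exact Or.inr hp0.le
    simpa using this.tendsto
  have h3 : ∀ᶠ δ in 𝓝 (0:ℝ), ((1 + δ) ^ p < 1 + ε ∧ 1 - ε < (1 - δ) ^ p) ∧ δ < 1 :=
    ((h1.eventually (eventually_lt_nhds (by linarith))).and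
      (h2.eventually (eventually_gt_nhds (by linarith)))).and
      (eventually_lt_nhds one_pos)
  have h4 : ∀ᶠ δ in 𝓝[>] (0:ℝ),
      (((1 + δ) ^ p < 1 + ε ∧ 1 - ε < (1 - δ) ^ p) ∧ δ < 1) ∧ 0 < δ :=
    (eventually_nhdsWithin_of_eventually_nhds h3).and
      (eventually_mem_nhdsWithin.mono fun x hx => hx)
  obtain ⟨δ, ⟨⟨hδ1, hδ2⟩, hδlt⟩, hδ0⟩ := h4.exists
  obtain ⟨C, hC⟩ : ∃ C : ℝ, C = (1 + 1 / δ) ^ p + (1 / δ) ^ p := ⟨_, rfl⟩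
  have hCnn : (0:ℝ) ≤ C := by rw [hC]; positivity
  refine ⟨C, hCnn, fun a b => ?_⟩
  have hB : (0:ℝ) ≤ |b| ^ p := Real.rpow_nonneg (abs_nonneg b) p
  by_cases hab : |b| ≤ δ * |a|
  · have ha0 : (0:ℝ) ≤ |a| := abs_nonneg a
    have hup : |a + b| ^ p ≤ (1 + ε) * |a| ^ p := by
      have h5 : |a + b| ≤ (1 + δ) * |a| := by
        calc |a + b| ≤ |a| + |b| := abs_add_le a b
          _ ≤ |a| + δ * |a| := by linarith
          _ = (1 + δ) * |a| := by ring
      calc |a + b| ^ p ≤ ((1 + δ) * |a|) ^ p :=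
            Real.rpow_le_rpow (abs_nonneg _) h5 hp0.le
        _ = (1 + δ) ^ p * |a| ^ p := Real.mul_rpow (by linarith) ha0
        _ ≤ (1 + ε) * |a| ^ p :=
            mul_le_mul_of_nonneg_right hδ1.le (Real.rpow_nonneg ha0 p)
    have hdown : (1 - ε) * |a| ^ p ≤ |a + b| ^ p := by
      by_cases hε1 : 1 - ε ≤ 0
      · calc (1 - ε) * |a| ^ p ≤ 0 :=
              mul_nonpos_of_nonpos_of_nonneg hε1 (Real.rpow_nonneg ha0 p)
          _ ≤ |a + b| ^ p := Real.rpow_nonneg (abs_nonneg _) p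
      · push_neg at hε1
        have h6 : (1 - δ) * |a| ≤ |a + b| := by
          have h := abs_sub_abs_le_abs_sub a (-b)
          rw [abs_neg, sub_neg_eq_add] at h
          nlinarith
        calc (1 - ε) * |a| ^ p ≤ (1 - δ) ^ p * |a| ^ p :=
              mul_le_mul_of_nonneg_right hδ2.le (Real.rpow_nonneg ha0 p)
          _ = ((1 - δ) * |a|) ^ p := (Real.mul_rpow (by linarith) ha0).symm
          _ ≤ |a + b| ^ p :=
              Real.rpow_le_rpow (mul_nonneg (by linarith) ha0) h6 hp0.le
    have hmain : |(|a + b| ^ p - |a| ^ p)| ≤ ε * |a| ^ p := by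
      rw [abs_le]; constructor <;> nlinarith
    have hb : (0:ℝ) ≤ C * |b| ^ p := mul_nonneg hCnn hB
    linarith
  · push_neg at hab
    have hba : |a| ≤ 1 / δ * |b| := by
      rw [div_mul_eq_mul_div, le_div_iff₀ hδ0]
      nlinarith [abs_nonneg b]
    have h7 : |a + b| ^ p ≤ (1 + 1 / δ) ^ p * |b| ^ p := by
      calc |a + b| ^ p ≤ ((1 + 1 / δ) * |b|) ^ p := by
            apply Real.rpow_le_rpow (abs_nonneg _) _ hp0.le
            calc |a + b| ≤ |a| + |b| := abs_add_le a b
              _ ≤ (1 + 1 / δ) * |b| := by nlinarith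
        _ = (1 + 1 / δ) ^ p * |b| ^ p := Real.mul_rpow (by positivity) (abs_nonneg b)
    have h8 : |a| ^ p ≤ (1 / δ) ^ p * |b| ^ p := by
      calc |a| ^ p ≤ (1 / δ * |b|) ^ p :=
            Real.rpow_le_rpow (abs_nonneg _) hba hp0.le
        _ = (1 / δ) ^ p * |b| ^ p := Real.mul_rpow (by positivity) (abs_nonneg b)
    have h9 : (0:ℝ) ≤ ε * |a| ^ p := by positivity
    have h10 : (0:ℝ) ≤ |a + b| ^ p := Real.rpow_nonneg (abs_nonneg _) p
    have h11 : (0:ℝ) ≤ |a| ^ p := Real.rpow_nonneg (abs_nonneg _) p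
    have h12 : (0:ℝ) ≤ (1 / δ) ^ p * |b| ^ p := mul_nonneg (by positivity) hB
    have h13 : (0:ℝ) ≤ (1 + 1 / δ) ^ p * |b| ^ p := mul_nonneg (by positivity) hB
    rw [abs_le, hC]
    constructor
    · nlinarith
    · nlinarith


lemma bl_two_pow {p : ℝ} (hp0 : 0 < p) (a b : ℝ) :
    |a + b| ^ p ≤ 2 ^ p * (|a| ^ p + |b| ^ p) := by
  have h1 : |a + b| ≤ 2 * max |a| |b| := by
    calc |a + b| ≤ |a| + |b| := abs_add_le a b
      _ ≤ 2 * max |a| |b| := by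
          rcases le_total |a| |b| with h | h <;>
            simp [max_eq_right, max_eq_left, h] <;> linarith
  calc |a + b| ^ p ≤ (2 * max |a| |b|) ^ p :=
        Real.rpow_le_rpow (abs_nonneg _) h1 hp0.le
    _ = 2 ^ p * (max |a| |b|) ^ p :=
        Real.mul_rpow (by norm_num) (le_max_of_le_left (abs_nonneg a))
    _ ≤ 2 ^ p * (|a| ^ p + |b| ^ p) := by
        apply mul_le_mul_of_nonneg_left _ (Real.rpow_nonneg (by norm_num) p)
        rcases max_cases |a| |b| with ⟨h, _⟩ | ⟨h, _⟩ <;> rw [h]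
        · nlinarith [Real.rpow_nonneg (abs_nonneg b) p]
        · nlinarith [Real.rpow_nonneg (abs_nonneg a) p]

theorem stmt_18 {α : Type*} [MeasurableSpace α] (ν : Measure α) (p : ℝ) (hp : 1 < p)
    (f : ℕ → α → ℝ) (g : α → ℝ)
    (hmeas : ∀ n, AEStronglyMeasurable (f n) ν) (hgmeas : AEStronglyMeasurable g ν)
    (hint : ∀ n, Integrable (fun x => |f n x| ^ p) ν)
    (hbdd : ∃ C : ℝ, ∀ n, (∫ x, |f n x| ^ p ∂ν) ≤ C)
    (hae : ∀ᵐ x ∂ν, Tendsto (fun n => f n x) atTop (𝓝 (g x))) :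
    Tendsto (fun n => (∫ x, |f n x| ^ p ∂ν) - ∫ x, |f n x - g x| ^ p ∂ν)
      atTop (𝓝 (∫ x, |g x| ^ p ∂ν)) := by
  obtain ⟨C₀, hC₀⟩ := hbdd
  have hp0 : 0 < p := lt_trans one_pos hp
  have hcont : Continuous fun t : ℝ => |t| ^ p :=
    (Real.continuous_rpow_const hp0.le).comp continuous_abs
  have hm : ∀ (u : α → ℝ), AEStronglyMeasurable u ν →
      AEStronglyMeasurable (fun x => |u x| ^ p) ν :=
    fun u hu => hcont.comp_aestronglyMeasurable hu
  have hC₀0 : 0 ≤ C₀ :=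
    le_trans (integral_nonneg fun x => Real.rpow_nonneg (abs_nonneg _) p) (hC₀ 0)
  -- |g|^p is integrable, by Fatou
  have hg_int : Integrable (fun x => |g x| ^ p) ν := by
    refine ⟨hm g hgmeas, ?_⟩
    rw [hasFiniteIntegral_iff_norm]
    have heq : ∀ᵐ x ∂ν, ENNReal.ofReal ‖|g x| ^ p‖ = ENNReal.ofReal (|g x| ^ p) := by
      filter_upwards with x
      rw [Real.norm_eq_abs, abs_of_nonneg (Real.rpow_nonneg (abs_nonneg _) p)]
    rw [lintegral_congr_ae heq]
    have hfatou : ∫⁻ x, ENNReal.ofReal (|g x| ^ p) ∂ν ≤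
        liminf (fun n => ∫⁻ x, ENNReal.ofReal (|f n x| ^ p) ∂ν) atTop := by
      refine le_trans (lintegral_mono_ae ?_)
        (lintegral_liminf_le' fun n => ((hm (f n) (hmeas n)).aemeasurable).ennreal_ofReal)
      filter_upwards [hae] with x hx
      have h1 : Tendsto (fun n => ENNReal.ofReal (|f n x| ^ p)) atTop
          (𝓝 (ENNReal.ofReal (|g x| ^ p))) :=
        (ENNReal.continuous_ofReal.tendsto _).comp ((hcont.tendsto _).comp hx)
      exact h1.liminf_eq.ge
    have hbound : ∀ n, ∫⁻ x, ENNReal.ofReal (|f n x| ^ p) ∂ν ≤ ENNReal.ofReal C₀ := fun n => by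
      rw [← ofReal_integral_eq_lintegral_ofReal (hint n)
        (Filter.Eventually.of_forall fun x => Real.rpow_nonneg (abs_nonneg _) p)]
      exact ENNReal.ofReal_le_ofReal (hC₀ n)
    calc ∫⁻ x, ENNReal.ofReal (|g x| ^ p) ∂ν
        ≤ liminf (fun n => ∫⁻ x, ENNReal.ofReal (|f n x| ^ p) ∂ν) atTop := hfatou
      _ ≤ ENNReal.ofReal C₀ := by
          calc liminf (fun n => ∫⁻ x, ENNReal.ofReal (|f n x| ^ p) ∂ν) atTop
              ≤ liminf (fun _ : ℕ => ENNReal.ofReal C₀) atTop :=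
                liminf_le_liminf (Filter.Eventually.of_forall hbound)
            _ = ENNReal.ofReal C₀ := liminf_const _
      _ < ⊤ := ENNReal.ofReal_lt_top
  -- |f n - g|^p is integrable
  have hfg_int : ∀ n, Integrable (fun x => |f n x - g x| ^ p) ν := by
    intro n
    refine Integrable.mono' (((hint n).add hg_int).const_mul (2 ^ p))
      (hm _ ((hmeas n).sub hgmeas)) ?_
    filter_upwards with x
    rw [Real.norm_eq_abs, abs_of_nonneg (Real.rpow_nonneg (abs_nonneg _) p)]
    have := bl_two_pow hp0 (f n x) (-g x)
    simpa [sub_eq_add_neg] using this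
  have hgI0 : 0 ≤ ∫ x, |g x| ^ p ∂ν :=
    integral_nonneg fun x => Real.rpow_nonneg (abs_nonneg _) p
  -- uniform bound on ∫ |f n - g|^p
  obtain ⟨M, hMdef⟩ : ∃ M : ℝ, M = 2 ^ p * (C₀ + ∫ x, |g x| ^ p ∂ν) + 1 := ⟨_, rfl⟩
  have h2p : (0:ℝ) < 2 ^ p := Real.rpow_pos_of_pos two_pos p
  have hM1 : 1 ≤ M := by rw [hMdef]; nlinarith
  have hM0 : 0 < M := lt_of_lt_of_le one_pos hM1
  have hMn : ∀ n, ∫ x, |f n x - g x| ^ p ∂ν ≤ M := by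
    intro n
    calc ∫ x, |f n x - g x| ^ p ∂ν
        ≤ ∫ x, 2 ^ p * (|f n x| ^ p + |g x| ^ p) ∂ν := by
          refine integral_mono (hfg_int n) (((hint n).add hg_int).const_mul (2 ^ p)) ?_
          intro x
          have := bl_two_pow hp0 (f n x) (-g x)
          simpa [sub_eq_add_neg] using this
      _ = 2 ^ p * ((∫ x, |f n x| ^ p ∂ν) + ∫ x, |g x| ^ p ∂ν) := by
          rw [integral_const_mul, integral_add (hint n) hg_int]
      _ ≤ 2 ^ p * (C₀ + ∫ x, |g x| ^ p ∂ν) :=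
          mul_le_mul_of_nonneg_left (by linarith [hC₀ n]) h2p.le
      _ ≤ M := by rw [hMdef]; linarith
  -- main estimate
  rw [Metric.tendsto_atTop]
  intro ε' hε'
  obtain ⟨ε, hεdef⟩ : ∃ ε : ℝ, ε = ε' / (2 * M) := ⟨_, rfl⟩
  have hεpos : 0 < ε := by rw [hεdef]; positivity
  obtain ⟨C, hCnn, hkey⟩ := bl_key hp hεpos
  obtain ⟨h, hhdef⟩ : ∃ h : ℕ → α → ℝ, h = fun n x =>
      max (|(|f n x| ^ p - |f n x - g x| ^ p - |g x| ^ p)| - ε * |f n x - g x| ^ p) 0 :=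
    ⟨_, rfl⟩
  have hX_int : ∀ n, Integrable
      (fun x => |f n x| ^ p - |f n x - g x| ^ p - |g x| ^ p) ν :=
    fun n => ((hint n).sub (hfg_int n)).sub hg_int
  have hh_int : ∀ n, Integrable (h n) ν := by
    intro n
    rw [hhdef]
    exact ((hX_int n).abs.sub ((hfg_int n).const_mul ε)).pos_part
  have hh_nonneg : ∀ n x, 0 ≤ h n x := fun n x => by rw [hhdef]; exact le_max_right _ _
  have hh_le : ∀ n x, h n x ≤ (C + 1) * |g x| ^ p := by
    intro n x
    have hBg : 0 ≤ |g x| ^ p := Real.rpow_nonneg (abs_nonneg _) p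
    rw [hhdef]
    refine max_le ?_ (by nlinarith)
    have hk := hkey (f n x - g x) (g x)
    rw [sub_add_cancel] at hk
    have htri : |(|f n x| ^ p - |f n x - g x| ^ p - |g x| ^ p)| ≤
        |(|f n x| ^ p - |f n x - g x| ^ p)| + |g x| ^ p := by
      have := abs_sub (|f n x| ^ p - |f n x - g x| ^ p) (|g x| ^ p)
      rwa [abs_of_nonneg hBg] at this
    have hk2 : |(|f n x| ^ p - |f n x - g x| ^ p)| ≤
        ε * |f n x - g x| ^ p + C * |g x| ^ p := by
      have : |f n x| = |f n x - g x + g x| := by ring_nf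
      rw [this]
      exact hkey (f n x - g x) (g x)
    nlinarith
  have hh_tendsto : ∀ᵐ x ∂ν, Tendsto (fun n => h n x) atTop (𝓝 0) := by
    filter_upwards [hae] with x hx
    have t1 : Tendsto (fun n => |f n x| ^ p) atTop (𝓝 (|g x| ^ p)) :=
      (hcont.tendsto _).comp hx
    have t0 : Tendsto (fun n => f n x - g x) atTop (𝓝 0) := by
      simpa using hx.sub (tendsto_const_nhds (x := g x))
    have t2 : Tendsto (fun n => |f n x - g x| ^ p) atTop (𝓝 0) := by
      have := (hcont.tendsto 0).comp t0
      simpa [Function.comp_def, abs_zero, Real.zero_rpow hp0.ne'] using this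
    have t3 : Tendsto (fun n =>
        |(|f n x| ^ p - |f n x - g x| ^ p - |g x| ^ p)| - ε * |f n x - g x| ^ p)
        atTop (𝓝 0) := by
      have := (((t1.sub t2).sub (tendsto_const_nhds (x := |g x| ^ p))).abs).sub
        (t2.const_mul ε)
      simpa using this
    rw [hhdef]
    have := t3.max (tendsto_const_nhds (x := (0:ℝ)))
    simpa using this
  have hDCT : Tendsto (fun n => ∫ x, h n x ∂ν) atTop (𝓝 0) := by
    have := tendsto_integral_of_dominated_convergence
      (fun x => (C + 1) * |g x| ^ p) (fun n => (hh_int n).1)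
      (hg_int.const_mul (C + 1))
      (fun n => Filter.Eventually.of_forall fun x => by
        rw [Real.norm_eq_abs, abs_of_nonneg (hh_nonneg n x)]; exact hh_le n x)
      hh_tendsto
    simpa using this
  obtain ⟨N, hN⟩ := (Metric.tendsto_atTop.mp hDCT) (ε' / 2) (by positivity)
  refine ⟨N, fun n hn => ?_⟩
  have hd := hN n hn
  rw [Real.dist_eq, sub_zero] at hd
  have hhI0 : 0 ≤ ∫ x, h n x ∂ν := integral_nonneg (hh_nonneg n)
  have hd2 : ∫ x, h n x ∂ν < ε' / 2 := lt_of_abs_lt hd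
  rw [Real.dist_eq]
  have hsplit : (∫ x, |f n x| ^ p ∂ν) - (∫ x, |f n x - g x| ^ p ∂ν)
      - ∫ x, |g x| ^ p ∂ν
      = ∫ x, (|f n x| ^ p - |f n x - g x| ^ p - |g x| ^ p) ∂ν := by
    have hsub : Integrable (fun x => |f n x| ^ p - |f n x - g x| ^ p) ν :=
      (hint n).sub (hfg_int n)
    rw [← integral_sub (hint n) (hfg_int n), ← integral_sub hsub hg_int]
  have habs : |∫ x, (|f n x| ^ p - |f n x - g x| ^ p - |g x| ^ p) ∂ν| ≤
      (∫ x, h n x ∂ν) + ε * ∫ x, |f n x - g x| ^ p ∂ν := by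
    calc |∫ x, (|f n x| ^ p - |f n x - g x| ^ p - |g x| ^ p) ∂ν|
        ≤ ∫ x, |(|f n x| ^ p - |f n x - g x| ^ p - |g x| ^ p)| ∂ν := by
          have := norm_integral_le_integral_norm
            (fun x => |f n x| ^ p - |f n x - g x| ^ p - |g x| ^ p) (μ := ν)
          simpa [Real.norm_eq_abs] using this
      _ ≤ ∫ x, (h n x + ε * |f n x - g x| ^ p) ∂ν := by
          refine integral_mono (hX_int n).abs
            ((hh_int n).add ((hfg_int n).const_mul ε)) ?_
          intro x
          have : h n x ≥ |(|f n x| ^ p - |f n x - g x| ^ p - |g x| ^ p)|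
              - ε * |f n x - g x| ^ p := by rw [hhdef]; exact le_max_left _ _
          simp only [Pi.add_apply]
          linarith
      _ = (∫ x, h n x ∂ν) + ε * ∫ x, |f n x - g x| ^ p ∂ν := by
          rw [integral_add (hh_int n) ((hfg_int n).const_mul ε), integral_const_mul]
  have hεM : ε * ∫ x, |f n x - g x| ^ p ∂ν ≤ ε' / 2 := by
    calc ε * ∫ x, |f n x - g x| ^ p ∂ν ≤ ε * M :=
          mul_le_mul_of_nonneg_left (hMn n) hεpos.le
      _ = ε' / 2 := by rw [hεdef]; field_simp
  calc |(∫ x, |f n x| ^ p ∂ν) - (∫ x, |f n x - g x| ^ p ∂ν) - ∫ x, |g x| ^ p ∂ν|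
      = |∫ x, (|f n x| ^ p - |f n x - g x| ^ p - |g x| ^ p) ∂ν| := by rw [hsplit]
    _ ≤ (∫ x, h n x ∂ν) + ε * ∫ x, |f n x - g x| ^ p ∂ν := habs
    _ < ε' / 2 + ε' / 2 := by linarith
    _ = ε' := by ring
end
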